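/- Let $(A_n)_{n \ge 1}$ and $(B_n)_{n \ge 1}$ be events in a probability space such that for every $n$, the event $B_n$ is independent of the $\sigma$-algebra generated by $A_1, \ldots, A_n$. Then for every $N \ge 1$, $\mathbb{P}\left(\bigcup_{n=N}^{\infty} (A_n \cap B_n)\right) \ge \left(\inf_{n \ge N} \mathbb{P}(B_n)\right) \cdot \mathbb{P}\left(\bigcup_{n=N}^{\infty} A_n\right)$. -/

import Mathlib

open MeasureTheory Set
open scoped ENNReal

/-- Feller–Chung lemma: if for each `n` the event `B n` is independent of the σ-algebra
generated by `A 1, …, A n`, then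
`ℙ(⋃_{n≥N} (A n ∩ B n)) ≥ (inf_{n≥N} ℙ(B n)) · ℙ(⋃_{n≥N} A n)`. -/
theorem stmt9 {Ω : Type*} [MeasurableSpace Ω] (ℙ : Measure Ω) [IsProbabilityMeasure ℙ]
    (A B : ℕ → Set Ω)
    (hA : ∀ n, MeasurableSet (A n)) (hB : ∀ n, MeasurableSet (B n))
    (hindep : ∀ n : ℕ, ∀ C : Set Ω,
      MeasurableSet[MeasurableSpace.generateFrom {s | ∃ i ≤ n, s = A i}] C →
        ℙ (B n ∩ C) = ℙ (B n) * ℙ C) :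
    ∀ N : ℕ, (⨅ n ∈ Ici N, ℙ (B n)) * ℙ (⋃ n ∈ Ici N, A n) ≤
      ℙ (⋃ n ∈ Ici N, A n ∩ B n) := by
  intro N
  set f : ℕ → Set Ω := fun k => A (N + k) with hf
  set D : ℕ → Set Ω := disjointed f with hDdef
  have hDsub : ∀ k, D k ⊆ f k := fun k => disjointed_subset f k
  have hDmeas : ∀ k, MeasurableSet (D k) :=
    MeasurableSet.disjointed (fun k => hA (N + k))
  have hdisj : Pairwise (Function.onFun Disjoint D) := disjoint_disjointed f
  have hiU : ⋃ k, D k = ⋃ n ∈ Ici N, A n := by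
    rw [hDdef, iUnion_disjointed]
    ext x
    simp only [mem_iUnion, mem_Ici, hf]
    constructor
    · rintro ⟨k, hk⟩; exact ⟨N + k, Nat.le_add_right _ _, hk⟩
    · rintro ⟨n, hn, hx⟩
      exact ⟨n - N, by rwa [Nat.add_sub_cancel' hn]⟩
  have hDgen : ∀ k, MeasurableSet[MeasurableSpace.generateFrom
      {s | ∃ i ≤ N + k, s = A i}] (D k) := by
    intro k
    set m := MeasurableSpace.generateFrom {s | ∃ i ≤ N + k, s = A i} with hm
    have hgen : ∀ i ≤ k, MeasurableSet[m] (A (N + i)) := fun i hi =>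
      MeasurableSpace.measurableSet_generateFrom ⟨N + i, by omega, rfl⟩
    rw [hDdef]
    cases k with
    | zero => rw [disjointed_zero]; exact hgen 0 le_rfl
    | succ n =>
      rw [← Order.succ_eq_add_one, disjointed_succ f (not_isMax n), partialSups_eq_biSup]
      refine MeasurableSet.diff (hgen (n + 1) le_rfl) ?_
      refine MeasurableSet.iUnion fun i => MeasurableSet.iUnion fun hi => ?_
      exact hgen i (hi.trans (Nat.le_succ n))
  have hindep' : ∀ k, ℙ (D k ∩ B (N + k)) = ℙ (B (N + k)) * ℙ (D k) := by
    intro k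
    rw [Set.inter_comm]
    exact hindep (N + k) (D k) (hDgen k)
  calc (⨅ n ∈ Ici N, ℙ (B n)) * ℙ (⋃ n ∈ Ici N, A n)
      = (⨅ n ∈ Ici N, ℙ (B n)) * ℙ (⋃ k, D k) := by rw [hiU]
    _ = (⨅ n ∈ Ici N, ℙ (B n)) * ∑' k, ℙ (D k) := by
        rw [measure_iUnion hdisj hDmeas]
    _ = ∑' k, (⨅ n ∈ Ici N, ℙ (B n)) * ℙ (D k) := ENNReal.tsum_mul_left.symm
    _ ≤ ∑' k, ℙ (D k ∩ B (N + k)) := by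
        refine ENNReal.tsum_le_tsum fun k => ?_
        rw [hindep' k]
        exact mul_le_mul_left (biInf_le _ (Nat.le_add_right N k)) _
    _ = ℙ (⋃ k, D k ∩ B (N + k)) := by
        refine (measure_iUnion ?_ fun k => (hDmeas k).inter (hB (N + k))).symm
        exact fun i j hij => ((hdisj hij).mono inter_subset_left inter_subset_left)
    _ ≤ ℙ (⋃ n ∈ Ici N, A n ∩ B n) := by
        refine measure_mono (iUnion_subset fun k => ?_)
        refine subset_trans ?_ (subset_biUnion_of_mem (Nat.le_add_right N k : N + k ∈ Ici N))
        exact inter_subset_inter_left _ (hDsub k)
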